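/- The global transformation τ_e induced by an injective pattern e is surjective (hence bijective, i.e., the cellular automaton is reversible), and its inverse is τ_e itself. -/
import Mathlib


/-- `c` matches the pattern `e` (with radii `L`, `R`, wildcard at position 0) at `n`. -/
def Matches (L R : ℕ) (e : ℤ → ZMod 2) (c : ℤ → ZMod 2) (n : ℤ) : Prop :=
  ∀ j : ℤ, -(L : ℤ) ≤ j → j ≤ (R : ℤ) → j ≠ 0 → c (n + j) = e j

/-- `e` is an injective pattern for radii `L`, `R`: every prefix sub-string containing
the wildcard differs from the suffix sub-string of the same length. -/
def IsInjectivePattern (L R : ℕ) (e : ℤ → ZMod 2) : Prop :=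
  ∀ s : ℤ, 1 ≤ s → s ≤ (R : ℤ) →
    ∃ j : ℤ, -(L : ℤ) ≤ j ∧ j ≤ (R : ℤ) - s ∧ j ≠ 0 ∧ j + s ≠ 0 ∧ e j ≠ e (j + s)

lemma no_two (L R : ℕ) (e : ℤ → ZMod 2) (he : IsInjectivePattern L R e)
    (c : ℤ → ZMod 2) (n s : ℤ) (hs1 : 1 ≤ s) (hsR : s ≤ (R : ℤ))
    (h1 : Matches L R e c n) (h2 : Matches L R e c (n + s)) : False := by
  obtain ⟨j, hj1, hj2, hj0, hjs0, hne⟩ := he s hs1 hsR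
  apply hne
  have a := h2 j hj1 (by linarith) hj0
  have b := h1 (j + s) (by linarith) (by linarith) hjs0
  have hx : n + s + j = n + (j + s) := by ring
  rw [hx] at a
  rw [← a, ← b]

lemma no_two' (L R : ℕ) (hLR : L ≤ R) (e : ℤ → ZMod 2) (he : IsInjectivePattern L R e)
    (c : ℤ → ZMod 2) (n j : ℤ) (hj1 : -(L : ℤ) ≤ j) (hj2 : j ≤ (R : ℤ)) (hj0 : j ≠ 0)
    (h1 : Matches L R e c n) (h2 : Matches L R e c (n + j)) : False := by
  rcases lt_or_gt_of_ne hj0 with h | h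
  · have hx : (n + j) + (-j) = n := by ring
    refine no_two L R e he c (n + j) (-j) (by omega)
      (by omega) h2 ?_
    rwa [hx]
  · exact no_two L R e he c n j (by omega) hj2 h1 h2

open Classical in
/-- The global transformation induced by the pattern `e`. -/
noncomputable def tau (L R : ℕ) (e : ℤ → ZMod 2) (c : ℤ → ZMod 2) : ℤ → ZMod 2 :=
  fun n => if Matches L R e c n then 1 + c n else c n

lemma matches_tau (L R : ℕ) (hLR : L ≤ R) (e : ℤ → ZMod 2) (he : IsInjectivePattern L R e)
    (c : ℤ → ZMod 2) (n : ℤ) (h : Matches L R e c n) : Matches L R e (tau L R e c) n := by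
  intro j hj1 hj2 hj0
  have hnm : ¬ Matches L R e c (n + j) := fun hm => no_two' L R hLR e he c n j hj1 hj2 hj0 h hm
  simp only [tau, if_neg hnm]
  exact h j hj1 hj2 hj0

lemma matches_tau_iff (L R : ℕ) (hLR : L ≤ R) (e : ℤ → ZMod 2) (he : IsInjectivePattern L R e)
    (c : ℤ → ZMod 2) (n : ℤ) : Matches L R e (tau L R e c) n ↔ Matches L R e c n := by
  constructor
  · intro h
    by_contra hnc
    simp only [Matches, not_forall] at hnc
    obtain ⟨j, hj1, hj2, hj0, hval⟩ := hnc
    have ht := h j hj1 hj2 hj0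
    have hm : Matches L R e c (n + j) := by
      by_contra hm
      simp only [tau, if_neg hm] at ht
      exact hval ht
    have := matches_tau L R hLR e he c (n + j) hm
    exact no_two' L R hLR e he (tau L R e c) n j hj1 hj2 hj0 h this
  · exact matches_tau L R hLR e he c n

lemma tau_tau (L R : ℕ) (hLR : L ≤ R) (e : ℤ → ZMod 2) (he : IsInjectivePattern L R e)
    (c : ℤ → ZMod 2) : tau L R e (tau L R e c) = c := by
  funext n
  by_cases h : Matches L R e c n
  · have h' : Matches L R e (tau L R e c) n := (matches_tau_iff L R hLR e he c n).mpr h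
    simp only [tau, if_pos h, if_pos h']
    have : (2 : ZMod 2) = 0 := rfl
    rw [← add_assoc]
    norm_num
    exact this
  · have h' : ¬ Matches L R e (tau L R e c) n :=
      fun hh => h ((matches_tau_iff L R hLR e he c n).mp hh)
    simp only [tau, if_neg h, if_neg h']


/-- the global transformation induced by an injective pattern is
surjective (hence bijective) and is its own inverse. -/
theorem tau_surjective_self_inverse (L R : ℕ) (hL : 1 ≤ L) (hLR : L ≤ R)
    (e : ℤ → ZMod 2) (he : IsInjectivePattern L R e) :
    Function.Surjective (tau L R e) ∧ Function.Bijective (tau L R e) ∧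
    Function.LeftInverse (tau L R e) (tau L R e) ∧
    Function.RightInverse (tau L R e) (tau L R e) := by
  have hli : Function.LeftInverse (tau L R e) (tau L R e) :=
    fun c => tau_tau L R hLR e he c
  exact ⟨hli.surjective, ⟨hli.injective, hli.surjective⟩, hli, hli⟩
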